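/- Conservation of momentum: Let J ⊆ ℝ be an open interval and let u : ℝ × J → ℝ be 1-periodic in x with u, u_x, u_t, u_{xx}, u_{xt}, u_{xxx}, u_{xxt} continuous on ℝ × J, and suppose u satisfies u_t − u_{txx} = 4uu_x + 2u_x² + 2uu_{xx} − 6u_xu_{xx} − 2uu_{xxx} on ℝ × J. Then the function t ↦ ∫₀¹ ( u(x,t) − u_{xx}(x,t) ) dx is constant on J. -/

import Mathlib

noncomputable section

/-- Partial derivative in the first (spatial) variable. -/
def pdx (f : ℝ → ℝ → ℝ) : ℝ → ℝ → ℝ := fun x t => deriv (fun y => f y t) x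

/-- Partial derivative in the second (time) variable. -/
def pdt (f : ℝ → ℝ → ℝ) : ℝ → ℝ → ℝ := fun x t => deriv (fun τ => f x τ) t

end

/-- **Conservation of momentum.**
Let `J ⊆ ℝ` be an open interval and let `u : ℝ × J → ℝ` be 1-periodic in `x`, of class
`C^{3,1}` (i.e. `u, u_x, u_t, u_xx, u_xt, u_xxx, u_xxt` continuous), solving
`u_t - u_{txx} = 4uu_x + 2u_x² + 2uu_{xx} - 6u_xu_{xx} - 2uu_{xxx}` on `ℝ × J`.
Then `t ↦ ∫₀¹ (u - u_{xx}) dx` is constant on `J`. -/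
theorem conservation_of_momentum
    (J : Set ℝ) (hJo : IsOpen J) (hJc : J.OrdConnected)
    (u : ℝ → ℝ → ℝ)
    (hper : ∀ t ∈ J, ∀ x : ℝ, u (x + 1) t = u x t)
    -- existence of the partial derivatives
    (hd1 : ∀ t ∈ J, ∀ x : ℝ, DifferentiableAt ℝ (fun y => u y t) x)
    (hd2 : ∀ t ∈ J, ∀ x : ℝ, DifferentiableAt ℝ (fun y => pdx u y t) x)
    (hd3 : ∀ t ∈ J, ∀ x : ℝ, DifferentiableAt ℝ (fun y => pdx (pdx u) y t) x)
    (hd4 : ∀ t ∈ J, ∀ x : ℝ, DifferentiableAt ℝ (fun τ => u x τ) t)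
    (hd5 : ∀ t ∈ J, ∀ x : ℝ, DifferentiableAt ℝ (fun y => pdt u y t) x)
    (hd6 : ∀ t ∈ J, ∀ x : ℝ, DifferentiableAt ℝ (fun y => pdx (pdt u) y t) x)
    -- continuity of u, u_x, u_t, u_xx, u_xt, u_xxx, u_xxt on ℝ × J
    (hc0 : ContinuousOn (fun p : ℝ × ℝ => u p.1 p.2) (Set.univ ×ˢ J))
    (hc1 : ContinuousOn (fun p : ℝ × ℝ => pdx u p.1 p.2) (Set.univ ×ˢ J))
    (hc2 : ContinuousOn (fun p : ℝ × ℝ => pdt u p.1 p.2) (Set.univ ×ˢ J))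
    (hc3 : ContinuousOn (fun p : ℝ × ℝ => pdx (pdx u) p.1 p.2) (Set.univ ×ˢ J))
    (hc4 : ContinuousOn (fun p : ℝ × ℝ => pdx (pdt u) p.1 p.2) (Set.univ ×ˢ J))
    (hc5 : ContinuousOn (fun p : ℝ × ℝ => pdx (pdx (pdx u)) p.1 p.2) (Set.univ ×ˢ J))
    (hc6 : ContinuousOn (fun p : ℝ × ℝ => pdx (pdx (pdt u)) p.1 p.2) (Set.univ ×ˢ J))
    -- the equation
    (heq : ∀ t ∈ J, ∀ x : ℝ,
      pdt u x t - pdx (pdx (pdt u)) x t =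
        4 * u x t * pdx u x t + 2 * (pdx u x t) ^ 2 + 2 * u x t * pdx (pdx u) x t
          - 6 * pdx u x t * pdx (pdx u) x t - 2 * u x t * pdx (pdx (pdx u)) x t) :
    ∀ t₁ ∈ J, ∀ t₂ ∈ J,
      (∫ x in (0:ℝ)..1, (u x t₁ - pdx (pdx u) x t₁)) =
      (∫ x in (0:ℝ)..1, (u x t₂ - pdx (pdx u) x t₂)) := by
  -- helper: periodicity of a derivative
  have perDeriv : ∀ (f : ℝ → ℝ) (_ : ∀ x, f (x + 1) = f x) (x : ℝ),
      deriv f (x + 1) = deriv f x := by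
    intro f hf x
    have h1 : (fun y => f (y + 1)) = f := funext hf
    calc deriv f (x + 1) = deriv (fun y => f (y + 1)) x := (deriv_comp_add_const f 1 x).symm
    _ = deriv f x := by rw [h1]
  have hopen : IsOpen ((Set.univ : Set ℝ) ×ˢ J) := isOpen_univ.prod hJo
  -- continuity in x at fixed t ∈ J
  have contx : ∀ (f : ℝ → ℝ → ℝ), ContinuousOn (fun p : ℝ × ℝ => f p.1 p.2) (Set.univ ×ˢ J) →
      ∀ t ∈ J, Continuous fun x => f x t := by
    intro f hf t ht
    rw [continuous_iff_continuousAt]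
    intro x
    have hmem : (x, t) ∈ (Set.univ : Set ℝ) ×ˢ J := by simp [ht]
    have h := hf.continuousAt (hopen.mem_nhds hmem)
    have hg : ContinuousAt (fun y : ℝ => (y, t)) x :=
      (continuous_id.prodMk continuous_const).continuousAt
    exact ContinuousAt.comp (f := fun y : ℝ => (y, t)) h hg
  -- continuity in t at fixed x, at points of J
  have contt : ∀ (f : ℝ → ℝ → ℝ), ContinuousOn (fun p : ℝ × ℝ => f p.1 p.2) (Set.univ ×ˢ J) →
      ∀ x : ℝ, ∀ t ∈ J, ContinuousAt (fun τ => f x τ) t := by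
    intro f hf x t ht
    have hmem : (x, t) ∈ (Set.univ : Set ℝ) ×ˢ J := by simp [ht]
    have h := hf.continuousAt (hopen.mem_nhds hmem)
    exact h.comp ((Continuous.prodMk_right x).continuousAt)
  -- periodicity of the derivatives
  have hPx : ∀ t ∈ J, ∀ x, pdx u (x + 1) t = pdx u x t := by
    intro t ht x
    exact perDeriv (fun y => u y t) (hper t ht) x
  have hPxx : ∀ t ∈ J, ∀ x, pdx (pdx u) (x + 1) t = pdx (pdx u) x t := by
    intro t ht x
    exact perDeriv (fun y => pdx u y t) (hPx t ht) x
  have hPt : ∀ t ∈ J, ∀ x, pdt u (x + 1) t = pdt u x t := by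
    intro t ht x
    have hEq : (fun τ => u (x + 1) τ) =ᶠ[nhds t] (fun τ => u x τ) := by
      filter_upwards [hJo.mem_nhds ht] with τ hτ using hper τ hτ x
    exact hEq.deriv_eq
  have hPtx : ∀ t ∈ J, ∀ x, pdx (pdt u) (x + 1) t = pdx (pdt u) x t := by
    intro t ht x
    exact perDeriv (fun y => pdt u y t) (hPt t ht) x
  -- ∫₀¹ u_xx dx = 0
  have hIxx : ∀ t ∈ J, (∫ x in (0:ℝ)..1, pdx (pdx u) x t) = 0 := by
    intro t ht
    have hderiv : ∀ x ∈ Set.uIcc (0:ℝ) 1,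
        HasDerivAt (fun y => pdx u y t) (pdx (pdx u) x t) x :=
      fun x _ => (hd2 t ht x).hasDerivAt
    have hint : IntervalIntegrable (fun x => pdx (pdx u) x t) MeasureTheory.volume 0 1 :=
      (contx _ hc3 t ht).intervalIntegrable 0 1
    rw [intervalIntegral.integral_eq_sub_of_hasDerivAt hderiv hint]
    have h10 : pdx u 1 t = pdx u 0 t := by simpa using hPx t ht 0
    rw [h10, sub_self]
  -- ∫₀¹ u_t dx = 0, via an explicit antiderivative
  have hIt : ∀ t ∈ J, (∫ x in (0:ℝ)..1, pdt u x t) = 0 := by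
    intro t ht
    set G : ℝ → ℝ := fun x => pdx (pdt u) x t + 2 * (u x t * u x t)
        + 2 * (u x t * pdx u x t) - 2 * (pdx u x t * pdx u x t)
        - 2 * (u x t * pdx (pdx u) x t) with hGdef
    have hGd : ∀ x ∈ Set.uIcc (0:ℝ) 1, HasDerivAt G (pdt u x t) x := by
      intro x _
      have h1 : HasDerivAt (fun y => u y t) (pdx u x t) x := (hd1 t ht x).hasDerivAt
      have h2 : HasDerivAt (fun y => pdx u y t) (pdx (pdx u) x t) x := (hd2 t ht x).hasDerivAt
      have h3 : HasDerivAt (fun y => pdx (pdx u) y t) (pdx (pdx (pdx u)) x t) x :=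
        (hd3 t ht x).hasDerivAt
      have h6 : HasDerivAt (fun y => pdx (pdt u) y t) (pdx (pdx (pdt u)) x t) x :=
        (hd6 t ht x).hasDerivAt
      have H := ((((h6.add ((h1.mul h1).const_mul 2)).add
          ((h1.mul h2).const_mul 2)).sub
          ((h2.mul h2).const_mul 2)).sub
          ((h1.mul h3).const_mul 2))
      convert H using 1
      · rfl
      · rfl
      · rfl
      linear_combination heq t ht x
    have hint : IntervalIntegrable (fun x => pdt u x t) MeasureTheory.volume 0 1 :=
      (contx _ hc2 t ht).intervalIntegrable 0 1
    rw [intervalIntegral.integral_eq_sub_of_hasDerivAt hGd hint]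
    have e0 : u 1 t = u 0 t := by simpa using hper t ht 0
    have e1 : pdx u 1 t = pdx u 0 t := by simpa using hPx t ht 0
    have e2 : pdx (pdx u) 1 t = pdx (pdx u) 0 t := by simpa using hPxx t ht 0
    have e3 : pdx (pdt u) 1 t = pdx (pdt u) 0 t := by simpa using hPtx t ht 0
    simp only [hGdef, e0, e1, e2, e3, sub_self]
  -- the key claim for ∫₀¹ u dx
  have key : ∀ a ∈ J, ∀ b ∈ J, a ≤ b →
      (∫ x in (0:ℝ)..1, u x a) = ∫ x in (0:ℝ)..1, u x b := by
    intro a ha b hb hab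
    have hIccJ : Set.Icc a b ⊆ J := hJc.out ha hb
    -- FTC in the time variable
    have hFTC : ∀ x : ℝ, u x b - u x a = ∫ τ in a..b, pdt u x τ := by
      intro x
      have hderiv : ∀ τ ∈ Set.uIcc a b, HasDerivAt (fun s => u x s) (pdt u x τ) τ := by
        intro τ hτ
        have hτJ : τ ∈ J := hIccJ (by rwa [Set.uIcc_of_le hab] at hτ)
        exact (hd4 τ hτJ x).hasDerivAt
      have hint : IntervalIntegrable (fun τ => pdt u x τ) MeasureTheory.volume a b := by
        apply ContinuousOn.intervalIntegrable
        exact continuousOn_of_forall_continuousAt fun τ hτ =>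
          contt _ hc2 x τ (hIccJ (by rwa [Set.uIcc_of_le hab] at hτ))
      rw [intervalIntegral.integral_eq_sub_of_hasDerivAt hderiv hint]
    -- joint integrability for Fubini
    have hintProd : MeasureTheory.IntegrableOn (fun p : ℝ × ℝ => pdt u p.1 p.2)
        (Set.Ioc (0:ℝ) 1 ×ˢ Set.Ioc a b) MeasureTheory.volume := by
      have hcomp : IsCompact (Set.Icc (0:ℝ) 1 ×ˢ Set.Icc a b) :=
        isCompact_Icc.prod isCompact_Icc
      have hsub : Set.Icc (0:ℝ) 1 ×ˢ Set.Icc a b ⊆ (Set.univ : Set ℝ) ×ˢ J :=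
        Set.prod_mono (Set.subset_univ _) hIccJ
      have := (hc2.mono hsub).integrableOn_compact (μ := MeasureTheory.volume) hcomp
      exact this.mono_set (Set.prod_mono Set.Ioc_subset_Icc_self Set.Ioc_subset_Icc_self)
    -- Fubini
    have hswap : (∫ x in Set.Ioc (0:ℝ) 1, ∫ τ in Set.Ioc a b, pdt u x τ)
        = ∫ τ in Set.Ioc a b, ∫ x in Set.Ioc (0:ℝ) 1, pdt u x τ := by
      apply MeasureTheory.integral_integral_swap
      rw [MeasureTheory.Measure.prod_restrict]
      exact hintProd
    have hinner : ∀ τ ∈ Set.Ioc a b,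
        (∫ x in Set.Ioc (0:ℝ) 1, pdt u x τ) = 0 := by
      intro τ hτ
      have hτJ : τ ∈ J := hIccJ (Set.Ioc_subset_Icc_self hτ)
      have := hIt τ hτJ
      rwa [intervalIntegral.integral_of_le (by norm_num : (0:ℝ) ≤ 1)] at this
    have hdiff : (∫ x in (0:ℝ)..1, (u x b - u x a)) = 0 := by
      calc (∫ x in (0:ℝ)..1, (u x b - u x a))
          = ∫ x in (0:ℝ)..1, ∫ τ in a..b, pdt u x τ := by
            apply intervalIntegral.integral_congr
            intro x _
            exact hFTC x
        _ = ∫ x in Set.Ioc (0:ℝ) 1, ∫ τ in Set.Ioc a b, pdt u x τ := by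
            rw [intervalIntegral.integral_of_le (by norm_num : (0:ℝ) ≤ 1)]
            apply MeasureTheory.setIntegral_congr_fun measurableSet_Ioc
            intro x _
            simp only [intervalIntegral.integral_of_le hab]
        _ = ∫ τ in Set.Ioc a b, ∫ x in Set.Ioc (0:ℝ) 1, pdt u x τ := hswap
        _ = ∫ τ in Set.Ioc a b, (0:ℝ) := by
            apply MeasureTheory.setIntegral_congr_fun measurableSet_Ioc
            intro τ hτ
            simpa using hinner τ hτ
        _ = 0 := by simp
    have hib : IntervalIntegrable (fun x => u x b) MeasureTheory.volume 0 1 :=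
      (contx _ hc0 b hb).intervalIntegrable 0 1
    have hia : IntervalIntegrable (fun x => u x a) MeasureTheory.volume 0 1 :=
      (contx _ hc0 a ha).intervalIntegrable 0 1
    have := intervalIntegral.integral_sub hib hia
    rw [hdiff] at this
    linarith [this]
  -- assemble
  intro t₁ ht₁ t₂ ht₂
  have split : ∀ t ∈ J, (∫ x in (0:ℝ)..1, (u x t - pdx (pdx u) x t))
      = ∫ x in (0:ℝ)..1, u x t := by
    intro t ht
    rw [intervalIntegral.integral_sub ((contx _ hc0 t ht).intervalIntegrable 0 1)
      ((contx _ hc3 t ht).intervalIntegrable 0 1), hIxx t ht, sub_zero]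
  rw [split t₁ ht₁, split t₂ ht₂]
  rcases le_total t₁ t₂ with h | h
  · exact key t₁ ht₁ t₂ ht₂ h
  · exact (key t₂ ht₂ t₁ ht₁ h).symm
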